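/- For any finite Markov chains 𝒳 and 𝒴, any cost matrix C: X×Y → ℝ₊, and any δ > 0, the infimum defining d_WL^{δ,(∞)}(𝒳,𝒴;C) is attained by a time-homogeneous Markovian coupling: d_WL^{δ,(∞)}(𝒳,𝒴;C) = min over time-homogeneous Markovian couplings of Σ_{t∈ℕ} δ(1−δ)^t Σ_{x,y} C(x,y) μ_t(x,y). -/

import Mathlib

open scoped BigOperators
open Filter Topology

/-- A probability vector on a finite type. -/
def IsProb {X : Type*} [Fintype X] (ν : X → ℝ) : Prop :=
  (∀ x, 0 ≤ ν x) ∧ ∑ x, ν x = 1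

/-- `μ` is a coupling of `α` and `β`. -/
def IsCoupling {X Y : Type*} [Fintype X] [Fintype Y]
    (μ : X × Y → ℝ) (α : X → ℝ) (β : Y → ℝ) : Prop :=
  (∀ z, 0 ≤ μ z) ∧ (∀ x, ∑ y, μ (x, y) = α x) ∧ (∀ y, ∑ x, μ (x, y) = β y)

/-- A finite Markov chain: a transition kernel together with an initial distribution. -/
structure MarkovChain (X : Type*) [Fintype X] where
  kernel : X → X → ℝ
  init : X → ℝ
  kernel_prob : ∀ x, IsProb (kernel x)
  init_prob : IsProb init

/-- A Markovian coupling between two finite Markov chains.  `trans t` is the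
transition coupling used from time `t` to time `t+1` (i.e. `m^{(t+1)}`). -/
structure MarkovCoupling {X Y : Type*} [Fintype X] [Fintype Y]
    (MX : MarkovChain X) (MY : MarkovChain Y) where
  init : X × Y → ℝ
  trans : ℕ → X × Y → X × Y → ℝ
  init_coupling : IsCoupling init MX.init MY.init
  trans_coupling : ∀ t xy, IsCoupling (trans t xy) (MX.kernel xy.1) (MY.kernel xy.2)

/-- Time-`t` law determined by an initial distribution and step kernels. -/
noncomputable def lawAux {X Y : Type*} [Fintype X] [Fintype Y]
    (ν : X × Y → ℝ) (m : ℕ → X × Y → X × Y → ℝ) : ℕ → X × Y → ℝ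
  | 0 => ν
  | t + 1 => fun z => ∑ w : X × Y, m t w z * lawAux ν m t w

/-- The time-`t` law of a Markovian coupling. -/
noncomputable def MarkovCoupling.law {X Y : Type*} [Fintype X] [Fintype Y]
    {MX : MarkovChain X} {MY : MarkovChain Y} (π : MarkovCoupling MX MY) :
    ℕ → X × Y → ℝ :=
  lawAux π.init π.trans

/-- `p` is a probability distribution on `ℕ`. -/
def IsProbNat (p : ℕ → ℝ) : Prop := (∀ t, 0 ≤ p t) ∧ HasSum p 1

/-- The Optimal Transport Markov (OTM) distance associated to `p`. -/
noncomputable def dOTM {X Y : Type*} [Fintype X] [Fintype Y] (p : ℕ → ℝ)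
    (MX : MarkovChain X) (MY : MarkovChain Y) (C : X × Y → ℝ) : ℝ :=
  ⨅ π : MarkovCoupling MX MY, ∑' t, p t * ∑ z : X × Y, C z * π.law t z

/-- A Markovian coupling is time homogeneous if its transition couplings do not
depend on the time index. -/
def IsTimeHomogeneous {X Y : Type*} [Fintype X] [Fintype Y]
    {MX : MarkovChain X} {MY : MarkovChain Y} (π : MarkovCoupling MX MY) : Prop :=
  ∀ t, π.trans t = π.trans 0

/-- The initial coupling is stationary for the coupled transition kernel. -/
def HasStationaryInit {X Y : Type*} [Fintype X] [Fintype Y]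
    {MX : MarkovChain X} {MY : MarkovChain Y} (π : MarkovCoupling MX MY) : Prop :=
  ∀ z' : X × Y, ∑ z : X × Y, π.trans 0 z z' * π.init z = π.init z'

/-- A Markov chain is stationary if its initial distribution is stationary for its kernel. -/
def IsStationaryChain {X : Type*} [Fintype X] (M : MarkovChain X) : Prop :=
  ∀ x', ∑ x, M.kernel x x' * M.init x = M.init x'

/-- The optimal transition coupling (OTC) distance. -/
noncomputable def dOTC {X Y : Type*} [Fintype X] [Fintype Y]
    (MX : MarkovChain X) (MY : MarkovChain Y) (C : X × Y → ℝ) : ℝ :=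
  ⨅ π : {π : MarkovCoupling MX MY // IsTimeHomogeneous π ∧ HasStationaryInit π},
    ∑ z : X × Y, C z * π.1.init z

/-- The geometric distribution `p_δ^∞` on `ℕ`. -/
noncomputable def pGeom (δ : ℝ) : ℕ → ℝ := fun t => δ * (1 - δ) ^ t

/-- The truncation `p_δ^k` of the geometric distribution at `k`. -/
noncomputable def pTrunc (δ : ℝ) (k : ℕ) : ℕ → ℝ := fun t =>
  if t < k then δ * (1 - δ) ^ t else if t = k then (1 - δ) ^ k else 0


section CP
variable {X Y : Type*} [Fintype X] [Fintype Y]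

variable {X Y : Type*} [Fintype X] [Fintype Y]

lemma IsProb.le_one {ν : X → ℝ} (h : IsProb ν) (x : X) : ν x ≤ 1 := by
  calc ν x ≤ ∑ x', ν x' := Finset.single_le_sum (fun i _ => h.1 i) (Finset.mem_univ x)
  _ = 1 := h.2

lemma isProb_prodCoupling {α : X → ℝ} {β : Y → ℝ} (hα : IsProb α) (hβ : IsProb β) :
    IsCoupling (fun z => α z.1 * β z.2) α β := by
  refine ⟨fun z => mul_nonneg (hα.1 _) (hβ.1 _), fun x => ?_, fun y => ?_⟩
  · show ∑ y, α x * β y = α x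
    rw [← Finset.mul_sum, hβ.2, mul_one]
  · show ∑ x, α x * β y = β y
    rw [← Finset.sum_mul, hα.2, one_mul]

lemma IsCoupling.isProb {μ : X × Y → ℝ} {α : X → ℝ} {β : Y → ℝ}
    (h : IsCoupling μ α β) (hα : IsProb α) : IsProb μ := by
  refine ⟨h.1, ?_⟩
  rw [Fintype.sum_prod_type]
  simp_rw [h.2.1]; exact hα.2

lemma isCompact_coupling {α : X → ℝ} {β : Y → ℝ} (hα : IsProb α) (hβ : IsProb β) :
    IsCompact {μ : X × Y → ℝ | IsCoupling μ α β} := by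
  refine IsCompact.of_isClosed_subset (isCompact_univ_pi (fun _ => isCompact_Icc (a := (0:ℝ)) (b := 1))) ?_ ?_
  · have : {μ : X × Y → ℝ | IsCoupling μ α β} =
        (⋂ z, {μ : X × Y → ℝ | 0 ≤ μ z}) ∩
        ((⋂ x, {μ : X × Y → ℝ | ∑ y, μ (x, y) = α x}) ∩
         (⋂ y, {μ : X × Y → ℝ | ∑ x, μ (x, y) = β y})) := by
      ext μ
      simp only [Set.mem_setOf_eq, Set.mem_inter_iff, Set.mem_iInter, IsCoupling]
    rw [this]
    refine IsClosed.inter (isClosed_iInter fun z => ?_) (IsClosed.inter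
      (isClosed_iInter fun x => ?_) (isClosed_iInter fun y => ?_))
    · exact isClosed_le continuous_const (continuous_apply z)
    · exact isClosed_eq (by fun_prop) continuous_const
    · exact isClosed_eq (by fun_prop) continuous_const
  · intro μ hμ
    intro z _
    refine ⟨hμ.1 z, ?_⟩
    obtain ⟨x, y⟩ := z
    calc μ (x, y) ≤ ∑ y', μ (x, y') :=
          Finset.single_le_sum (fun i _ => hμ.1 (x, i)) (Finset.mem_univ y)
    _ = α x := hμ.2.1 x
    _ ≤ 1 := hα.le_one x

lemma exists_coupling_min {α : X → ℝ} {β : Y → ℝ} (hα : IsProb α) (hβ : IsProb β)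
    (f : X × Y → ℝ) :
    ∃ μ, IsCoupling μ α β ∧ ∀ μ', IsCoupling μ' α β →
      ∑ z, μ z * f z ≤ ∑ z, μ' z * f z := by
  obtain ⟨μ, hμ1, hμ2⟩ := (isCompact_coupling hα hβ).exists_isMinOn
    ⟨_, isProb_prodCoupling hα hβ⟩
    (f := fun μ => ∑ z, μ z * f z) (by fun_prop)
  exact ⟨μ, hμ1, fun μ' hμ' => hμ2 hμ'⟩

/-- minimal coupling cost -/
noncomputable def minC (α : X → ℝ) (β : Y → ℝ) (f : X × Y → ℝ) : ℝ :=
  sInf ((fun μ => ∑ z, μ z * f z) '' {μ : X × Y → ℝ | IsCoupling μ α β})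

lemma minC_isLeast {α : X → ℝ} {β : Y → ℝ} (hα : IsProb α) (hβ : IsProb β)
    (f : X × Y → ℝ) :
    ∃ μ, IsCoupling μ α β ∧ minC α β f = ∑ z, μ z * f z ∧
      ∀ μ', IsCoupling μ' α β → ∑ z, μ z * f z ≤ ∑ z, μ' z * f z := by
  obtain ⟨μ, h1, h2⟩ := exists_coupling_min hα hβ f
  refine ⟨μ, h1, ?_, h2⟩
  exact (IsLeast.csInf_eq ⟨⟨μ, h1, rfl⟩, by rintro c ⟨μ', hμ', rfl⟩; exact h2 μ' hμ'⟩)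

lemma minC_le {α : X → ℝ} {β : Y → ℝ} (hα : IsProb α) (hβ : IsProb β)
    {f : X × Y → ℝ} {μ : X × Y → ℝ} (hμ : IsCoupling μ α β) :
    minC α β f ≤ ∑ z, μ z * f z := by
  obtain ⟨μ₀, h1, h2, h3⟩ := minC_isLeast hα hβ f
  rw [h2]; exact h3 μ hμ

lemma minC_sub_le {α : X → ℝ} {β : Y → ℝ} (hα : IsProb α) (hβ : IsProb β)
    (f g : X × Y → ℝ) : minC α β f - minC α β g ≤ dist f g := by
  obtain ⟨μ, h1, h2, _⟩ := minC_isLeast hα hβ g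
  have h4 : minC α β f ≤ ∑ z, μ z * f z := minC_le hα hβ h1
  have h5 : ∑ z, μ z * f z - ∑ z, μ z * g z ≤ dist f g := by
    rw [← Finset.sum_sub_distrib]
    have : ∀ z : X × Y, μ z * f z - μ z * g z ≤ μ z * dist f g := by
      intro z
      rw [← mul_sub]
      refine mul_le_mul_of_nonneg_left ?_ (h1.1 z)
      calc f z - g z ≤ |f z - g z| := le_abs_self _
      _ = dist (f z) (g z) := (Real.dist_eq _ _).symm
      _ ≤ dist f g := dist_le_pi_dist f g z
    calc ∑ z, (μ z * f z - μ z * g z) ≤ ∑ z, μ z * dist f g := Finset.sum_le_sum (fun z _ => this z)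
    _ = dist f g := by
        rw [← Finset.sum_mul, (h1.isProb hα).2, one_mul]
  linarith

lemma abs_minC_sub {α : X → ℝ} {β : Y → ℝ} (hα : IsProb α) (hβ : IsProb β)
    (f g : X × Y → ℝ) : |minC α β f - minC α β g| ≤ dist f g := by
  rw [abs_sub_le_iff]
  exact ⟨minC_sub_le hα hβ f g, (dist_comm f g) ▸ minC_sub_le hα hβ g f⟩

end CP


section Bell
variable {X Y : Type*} [Fintype X] [Fintype Y]

noncomputable def bell (δ : ℝ) (C : X × Y → ℝ) (MX : MarkovChain X) (MY : MarkovChain Y)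
    (f : X × Y → ℝ) : X × Y → ℝ :=
  fun z => δ * C z + (1 - δ) * minC (MX.kernel z.1) (MY.kernel z.2) f

lemma exists_bell_fixed (δ : ℝ) (hδ0 : 0 < δ) (hδ1 : δ ≤ 1) (C : X × Y → ℝ)
    (MX : MarkovChain X) (MY : MarkovChain Y) :
    ∃ V : X × Y → ℝ, bell δ C MX MY V = V := by
  set K : NNReal := ⟨1 - δ, by linarith⟩ with hK
  have hlip : LipschitzWith K (bell δ C MX MY) := by
    apply LipschitzWith.of_dist_le_mul
    intro f g
    have hr : (0:ℝ) ≤ (K : ℝ) * dist f g := mul_nonneg K.2 dist_nonneg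
    rw [dist_pi_le_iff hr]
    intro z
    have h := abs_minC_sub (MX.kernel_prob z.1) (MY.kernel_prob z.2) f g
    rw [Real.dist_eq]
    have heq : bell δ C MX MY f z - bell δ C MX MY g z
        = (1 - δ) * (minC (MX.kernel z.1) (MY.kernel z.2) f
            - minC (MX.kernel z.1) (MY.kernel z.2) g) := by
      simp only [bell]; ring
    rw [heq, abs_mul, abs_of_nonneg (by linarith : (0:ℝ) ≤ 1 - δ)]
    show (1 - δ) * _ ≤ (1 - δ) * dist f g
    exact mul_le_mul_of_nonneg_left h (by linarith)
  have hcontr : ContractingWith K (bell δ C MX MY) := by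
    refine ⟨?_, hlip⟩
    rw [← NNReal.coe_lt_coe]
    show (1 - δ : ℝ) < (1 : NNReal)
    rw [NNReal.coe_one]; linarith
  exact ⟨_, hcontr.fixedPoint_isFixedPt⟩

end Bell

section Pol
variable {X Y : Type*} [Fintype X] [Fintype Y]

open Classical in
/-- point mass at `w` -/
noncomputable def unitMass (w : X × Y) : X × Y → ℝ := fun z => if z = w then 1 else 0

lemma isProb_unitMass (w : X × Y) : IsProb (unitMass w) := by
  constructor
  · intro z; unfold unitMass; split <;> norm_num
  · simp [unitMass]

lemma lawAux_prob {ν : X × Y → ℝ} {m : ℕ → X × Y → X × Y → ℝ}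
    (hν : IsProb ν) (hm : ∀ t w, IsProb (m t w)) (t : ℕ) : IsProb (lawAux ν m t) := by
  induction t with
  | zero => exact hν
  | succ t ih =>
    constructor
    · intro z
      exact Finset.sum_nonneg fun w _ => mul_nonneg ((hm t w).1 z) (ih.1 w)
    · show ∑ z, ∑ w, m t w z * lawAux ν m t w = 1
      rw [Finset.sum_comm]
      have h : ∀ w : X × Y, ∑ z, m t w z * lawAux ν m t w = lawAux ν m t w := by
        intro w; rw [← Finset.sum_mul, (hm t w).2, one_mul]
      calc ∑ w, ∑ z, m t w z * lawAux ν m t w = ∑ w, lawAux ν m t w :=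
            Finset.sum_congr rfl fun w _ => h w
      _ = 1 := ih.2

/-- the discounted value of a policy `m` started from `ν` -/
noncomputable def polVal (δ : ℝ) (C : X × Y → ℝ) (m : ℕ → X × Y → X × Y → ℝ)
    (ν : X × Y → ℝ) : ℝ :=
  ∑' t, pGeom δ t * ∑ z, C z * lawAux ν m t z

lemma cost_nonneg {C ν : X × Y → ℝ} {m : ℕ → X × Y → X × Y → ℝ} (hC : ∀ z, 0 ≤ C z)
    (hν : IsProb ν) (hm : ∀ t w, IsProb (m t w)) (t : ℕ) :
    0 ≤ ∑ z, C z * lawAux ν m t z :=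
  Finset.sum_nonneg fun z _ => mul_nonneg (hC z) ((lawAux_prob hν hm t).1 z)

lemma cost_le {C ν : X × Y → ℝ} {m : ℕ → X × Y → X × Y → ℝ} (hC : ∀ z, 0 ≤ C z)
    (hν : IsProb ν) (hm : ∀ t w, IsProb (m t w)) (t : ℕ) :
    ∑ z, C z * lawAux ν m t z ≤ ∑ z, C z := by
  refine Finset.sum_le_sum fun z _ => ?_
  calc C z * lawAux ν m t z ≤ C z * 1 :=
        mul_le_mul_of_nonneg_left ((lawAux_prob hν hm t).le_one z) (hC z)
  _ = C z := mul_one _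

lemma pGeom_nonneg {δ : ℝ} (hδ0 : 0 < δ) (hδ1 : δ ≤ 1) (t : ℕ) : 0 ≤ pGeom δ t :=
  mul_nonneg hδ0.le (pow_nonneg (by linarith) t)

lemma summable_polVal {δ : ℝ} (hδ0 : 0 < δ) (hδ1 : δ ≤ 1) {C ν : X × Y → ℝ}
    {m : ℕ → X × Y → X × Y → ℝ} (hC : ∀ z, 0 ≤ C z) (hν : IsProb ν)
    (hm : ∀ t w, IsProb (m t w)) :
    Summable (fun t => pGeom δ t * ∑ z, C z * lawAux ν m t z) := by
  refine Summable.of_nonneg_of_le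
    (fun t => mul_nonneg (pGeom_nonneg hδ0 hδ1 t) (cost_nonneg hC hν hm t))
    (fun t => ?_)
    (((summable_geometric_of_lt_one (r := 1 - δ) (by linarith) (by linarith)).mul_right (δ * ∑ z, C z)))
  calc pGeom δ t * ∑ z, C z * lawAux ν m t z ≤ pGeom δ t * ∑ z, C z :=
        mul_le_mul_of_nonneg_left (cost_le hC hν hm t) (pGeom_nonneg hδ0 hδ1 t)
  _ = (1 - δ) ^ t * (δ * ∑ z, C z) := by unfold pGeom; ring

lemma polVal_nonneg {δ : ℝ} (hδ0 : 0 < δ) (hδ1 : δ ≤ 1) {C ν : X × Y → ℝ}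
    {m : ℕ → X × Y → X × Y → ℝ} (hC : ∀ z, 0 ≤ C z) (hν : IsProb ν)
    (hm : ∀ t w, IsProb (m t w)) : 0 ≤ polVal δ C m ν :=
  tsum_nonneg fun t => mul_nonneg (pGeom_nonneg hδ0 hδ1 t) (cost_nonneg hC hν hm t)

lemma lawAux_linear (ν : X × Y → ℝ) (m : ℕ → X × Y → X × Y → ℝ) (t : ℕ) :
    ∀ z, lawAux ν m t z = ∑ w, ν w * lawAux (unitMass w) m t z := by
  induction t with
  | zero =>
    intro z
    show ν z = ∑ w, ν w * unitMass w z
    simp [unitMass, mul_ite]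
  | succ t ih =>
    intro z
    show ∑ u, m t u z * lawAux ν m t u
        = ∑ w, ν w * ∑ u, m t u z * lawAux (unitMass w) m t u
    calc ∑ u, m t u z * lawAux ν m t u
        = ∑ u, m t u z * ∑ w, ν w * lawAux (unitMass w) m t u :=
          Finset.sum_congr rfl fun u _ => by rw [ih u]
    _ = ∑ u, ∑ w, ν w * (m t u z * lawAux (unitMass w) m t u) := by
          refine Finset.sum_congr rfl fun u _ => ?_
          rw [Finset.mul_sum]
          exact Finset.sum_congr rfl fun w _ => by ring
    _ = ∑ w, ν w * ∑ u, m t u z * lawAux (unitMass w) m t u := by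
          rw [Finset.sum_comm]
          exact Finset.sum_congr rfl fun w _ => (Finset.mul_sum _ _ _).symm

lemma lawAux_shift (ν : X × Y → ℝ) (m : ℕ → X × Y → X × Y → ℝ) (t : ℕ) :
    ∀ z, lawAux ν m (t + 1) z
      = lawAux (fun z' => ∑ w, m 0 w z' * ν w) (fun s => m (s + 1)) t z := by
  induction t with
  | zero => intro z; rfl
  | succ t ih =>
    intro z
    show ∑ w, m (t + 1) w z * lawAux ν m (t + 1) w
        = ∑ w, m (t + 1) w z * lawAux (fun z' => ∑ w, m 0 w z' * ν w) (fun s => m (s + 1)) t w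
    exact Finset.sum_congr rfl fun w _ => by rw [ih w]

lemma polVal_linear {δ : ℝ} (hδ0 : 0 < δ) (hδ1 : δ ≤ 1) {C : X × Y → ℝ}
    {m : ℕ → X × Y → X × Y → ℝ} (hC : ∀ z, 0 ≤ C z) (hm : ∀ t w, IsProb (m t w))
    (ν : X × Y → ℝ) :
    polVal δ C m ν = ∑ w, ν w * polVal δ C m (unitMass w) := by
  unfold polVal
  have h1 : ∀ t, pGeom δ t * ∑ z, C z * lawAux ν m t z
      = ∑ w, ν w * (pGeom δ t * ∑ z, C z * lawAux (unitMass w) m t z) := by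
    intro t
    have h2 : ∑ z, C z * lawAux ν m t z
        = ∑ w, ν w * ∑ z, C z * lawAux (unitMass w) m t z := by
      calc ∑ z, C z * lawAux ν m t z
          = ∑ z, C z * ∑ w, ν w * lawAux (unitMass w) m t z :=
            Finset.sum_congr rfl fun z _ => by rw [lawAux_linear ν m t z]
      _ = ∑ z, ∑ w, ν w * (C z * lawAux (unitMass w) m t z) := by
            refine Finset.sum_congr rfl fun z _ => ?_
            rw [Finset.mul_sum]
            exact Finset.sum_congr rfl fun w _ => by ring
      _ = ∑ w, ν w * ∑ z, C z * lawAux (unitMass w) m t z := by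
            rw [Finset.sum_comm]
            exact Finset.sum_congr rfl fun w _ => (Finset.mul_sum _ _ _).symm
    rw [h2, Finset.mul_sum]
    exact Finset.sum_congr rfl fun w _ => by ring
  rw [tsum_congr h1,
    Summable.tsum_finsetSum (fun w _ => (summable_polVal hδ0 hδ1 hC (isProb_unitMass w) hm).mul_left (ν w))]
  exact Finset.sum_congr rfl fun w _ => tsum_mul_left

lemma polVal_rec {δ : ℝ} (hδ0 : 0 < δ) (hδ1 : δ ≤ 1) {C : X × Y → ℝ}
    {m : ℕ → X × Y → X × Y → ℝ} (hC : ∀ z, 0 ≤ C z) (hm : ∀ t w, IsProb (m t w))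
    (w : X × Y) :
    polVal δ C m (unitMass w) = δ * C w + (1 - δ)
      * ∑ z', m 0 w z' * polVal δ C (fun s => m (s + 1)) (unitMass z') := by
  have hm' : ∀ t u, IsProb ((fun s => m (s + 1)) t u) := fun t u => hm (t + 1) u
  unfold polVal
  rw [Summable.tsum_eq_zero_add (summable_polVal hδ0 hδ1 hC (isProb_unitMass w) hm)]
  have h0 : pGeom δ 0 * ∑ z, C z * lawAux (unitMass w) m 0 z = δ * C w := by
    show pGeom δ 0 * ∑ z, C z * unitMass w z = δ * C w
    simp [pGeom, unitMass, mul_ite]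
  rw [h0]
  congr 1
  have h2 : ∀ t, pGeom δ (t + 1) * ∑ z, C z * lawAux (unitMass w) m (t + 1) z
      = (1 - δ) * (pGeom δ t * ∑ z, C z * lawAux (m 0 w) (fun s => m (s + 1)) t z) := by
    intro t
    have hsh : ∀ z, lawAux (unitMass w) m (t + 1) z
        = lawAux (m 0 w) (fun s => m (s + 1)) t z := by
      intro z
      rw [lawAux_shift]
      have : (fun z' => ∑ u, m 0 u z' * unitMass w u) = m 0 w := by
        funext z'
        simp [unitMass, mul_ite]
      rw [this]
    have hsum : ∑ z, C z * lawAux (unitMass w) m (t + 1) z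
        = ∑ z, C z * lawAux (m 0 w) (fun s => m (s + 1)) t z :=
      Finset.sum_congr rfl fun z _ => by rw [hsh z]
    rw [hsum]
    show δ * (1 - δ) ^ (t + 1) * _ = _
    rw [pow_succ]
    unfold pGeom
    ring
  rw [tsum_congr h2, tsum_mul_left]
  congr 1
  exact polVal_linear hδ0 hδ1 hC hm' (m 0 w)

end Pol


lemma affine_fix_unique {X Y : Type*} [Fintype X] [Fintype Y] {δ : ℝ}
    (hδ0 : 0 < δ) (hδ1 : δ ≤ 1)
    {k : X × Y → X × Y → ℝ} (hk : ∀ z, IsProb (k z)) {a W V : X × Y → ℝ}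
    (hW : ∀ z, W z = a z + (1 - δ) * ∑ z', k z z' * W z')
    (hV : ∀ z, V z = a z + (1 - δ) * ∑ z', k z z' * V z') : W = V := by
  have hD : ∀ z, dist (W z) (V z) ≤ (1 - δ) * dist W V := by
    intro z
    rw [Real.dist_eq]
    have e1 : W z - V z = (1 - δ) * ∑ z', k z z' * (W z' - V z') := by
      have e2 : ∑ z', k z z' * (W z' - V z')
          = ∑ z', k z z' * W z' - ∑ z', k z z' * V z' := by
        rw [← Finset.sum_sub_distrib]
        exact Finset.sum_congr rfl fun _ _ => by ring
      rw [e2, hW z, hV z]; ring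
    rw [e1, abs_mul, abs_of_nonneg (by linarith : (0:ℝ) ≤ 1 - δ)]
    refine mul_le_mul_of_nonneg_left ?_ (by linarith)
    calc |∑ z', k z z' * (W z' - V z')| ≤ ∑ z', |k z z' * (W z' - V z')| :=
          Finset.abs_sum_le_sum_abs _ _
    _ ≤ ∑ z', k z z' * dist W V := by
        refine Finset.sum_le_sum fun z' _ => ?_
        rw [abs_mul, abs_of_nonneg ((hk z).1 z')]
        refine mul_le_mul_of_nonneg_left ?_ ((hk z).1 z')
        rw [← Real.dist_eq]
        exact dist_le_pi_dist W V z'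
    _ = dist W V := by rw [← Finset.sum_mul, (hk z).2, one_mul]
  have h2 : dist W V ≤ (1 - δ) * dist W V :=
    (dist_pi_le_iff (mul_nonneg (by linarith) dist_nonneg)).2 hD
  have h3 : dist W V = 0 := by nlinarith [dist_nonneg (x := W) (y := V)]
  exact eq_of_dist_eq_zero h3

/-- For `δ > 0`, the infimum defining `d_WL^{δ,(∞)}` is attained by a
time-homogeneous Markovian coupling (hence it is a minimum over the
time-homogeneous Markovian couplings). -/
theorem stmt6 {X Y : Type*} [Fintype X] [Fintype Y]
    (MX : MarkovChain X) (MY : MarkovChain Y)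
    (C : X × Y → ℝ) (hC : ∀ z, 0 ≤ C z)
    (δ : ℝ) (hδ0 : 0 < δ) (hδ1 : δ ≤ 1) :
    ∃ π : MarkovCoupling MX MY, IsTimeHomogeneous π ∧
      ∑' t, pGeom δ t * ∑ z : X × Y, C z * π.law t z = dOTM (pGeom δ) MX MY C := by
  classical
  obtain ⟨V, hVfix⟩ := exists_bell_fixed δ hδ0 hδ1 C MX MY
  have hVfix' : ∀ z : X × Y,
      V z = δ * C z + (1 - δ) * minC (MX.kernel z.1) (MY.kernel z.2) V := by
    intro z
    conv_lhs => rw [← hVfix]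
    rfl
  obtain hex := fun z : X × Y =>
    minC_isLeast (MX.kernel_prob z.1) (MY.kernel_prob z.2) V
  choose mstar hcpl heq hmin using hex
  have hmprob : ∀ z, IsProb (mstar z) := fun z => (hcpl z).isProb (MX.kernel_prob z.1)
  have hmsprob : ∀ (t : ℕ) (w : X × Y), IsProb ((fun _ : ℕ => mstar) t w) :=
    fun _ w => hmprob w
  -- the stationary value function equals V
  have hWV : (fun z => polVal δ C (fun _ : ℕ => mstar) (unitMass z)) = V := by
    refine affine_fix_unique (a := fun z => δ * C z) hδ0 hδ1 hmprob ?_ ?_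
    · exact fun z => polVal_rec hδ0 hδ1 hC hmsprob z
    · intro z
      rw [hVfix' z, heq z]
  have hWVz : ∀ z, polVal δ C (fun _ : ℕ => mstar) (unitMass z) = V z :=
    fun z => congrFun hWV z
  -- V is a lower bound for the value of any policy
  have key : ∀ n : ℕ, ∀ m : ℕ → X × Y → X × Y → ℝ,
      (∀ t w, IsCoupling (m t w) (MX.kernel w.1) (MY.kernel w.2)) →
      ∀ z, V z - polVal δ C m (unitMass z) ≤ (1 - δ) ^ n * ‖V‖ := by
    intro n
    induction n with
    | zero =>
      intro m hm z
      have h1 : 0 ≤ polVal δ C m (unitMass z) :=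
        polVal_nonneg hδ0 hδ1 hC (isProb_unitMass z)
          (fun t w => (hm t w).isProb (MX.kernel_prob w.1))
      have h2 : V z ≤ ‖V‖ := le_trans (le_abs_self _) (norm_le_pi_norm V z)
      simp only [pow_zero, one_mul]
      linarith
    | succ n ih =>
      intro m hm z
      have hmp : ∀ t w, IsProb (m t w) :=
        fun t w => (hm t w).isProb (MX.kernel_prob w.1)
      have hVle : V z ≤ δ * C z + (1 - δ) * ∑ z', m 0 z z' * V z' := by
        rw [hVfix' z]
        have h5 := minC_le (MX.kernel_prob z.1) (MY.kernel_prob z.2) (f := V) (hm 0 z)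
        exact add_le_add (le_refl _) (mul_le_mul_of_nonneg_left h5 (by linarith))
      have hshift := ih (fun s => m (s + 1)) (fun t w => hm (t + 1) w)
      have hsum : ∑ z', m 0 z z' * V z'
          - ∑ z', m 0 z z' * polVal δ C (fun s => m (s + 1)) (unitMass z')
          ≤ (1 - δ) ^ n * ‖V‖ := by
        rw [← Finset.sum_sub_distrib]
        calc ∑ z', (m 0 z z' * V z'
              - m 0 z z' * polVal δ C (fun s => m (s + 1)) (unitMass z'))
            ≤ ∑ z', m 0 z z' * ((1 - δ) ^ n * ‖V‖) := by
              refine Finset.sum_le_sum fun z' _ => ?_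
              rw [← mul_sub]
              exact mul_le_mul_of_nonneg_left (hshift z') ((hmp 0 z).1 z')
        _ = (1 - δ) ^ n * ‖V‖ := by rw [← Finset.sum_mul, (hmp 0 z).2, one_mul]
      rw [polVal_rec hδ0 hδ1 hC hmp z]
      have h3 : (1 - δ) * (∑ z', m 0 z z' * V z'
            - ∑ z', m 0 z z' * polVal δ C (fun s => m (s + 1)) (unitMass z'))
          ≤ (1 - δ) * ((1 - δ) ^ n * ‖V‖) :=
        mul_le_mul_of_nonneg_left hsum (by linarith)
      have h4 : V z - (δ * C z
            + (1 - δ) * ∑ z', m 0 z z' * polVal δ C (fun s => m (s + 1)) (unitMass z'))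
          ≤ (1 - δ) * ((1 - δ) ^ n * ‖V‖) := by
        have e5 : (1 - δ) * (∑ z', m 0 z z' * V z'
              - ∑ z', m 0 z z' * polVal δ C (fun s => m (s + 1)) (unitMass z'))
            = (1 - δ) * ∑ z', m 0 z z' * V z'
              - (1 - δ) * ∑ z', m 0 z z' * polVal δ C (fun s => m (s + 1)) (unitMass z') := by
          ring
        rw [e5] at h3
        linarith
      calc V z - (δ * C z
            + (1 - δ) * ∑ z', m 0 z z' * polVal δ C (fun s => m (s + 1)) (unitMass z'))
          ≤ (1 - δ) * ((1 - δ) ^ n * ‖V‖) := h4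
      _ = (1 - δ) ^ (n + 1) * ‖V‖ := by ring
  have hVle_pol : ∀ m : ℕ → X × Y → X × Y → ℝ,
      (∀ t w, IsCoupling (m t w) (MX.kernel w.1) (MY.kernel w.2)) →
      ∀ z, V z ≤ polVal δ C m (unitMass z) := by
    intro m hm z
    have htend : Tendsto (fun n : ℕ => (1 - δ) ^ n * ‖V‖) atTop (𝓝 0) := by
      rw [show (0 : ℝ) = 0 * ‖V‖ by ring]
      exact (tendsto_pow_atTop_nhds_zero_of_lt_one (by linarith) (by linarith)).mul_const _
    have h0 : V z - polVal δ C m (unitMass z) ≤ 0 :=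
      ge_of_tendsto' htend (fun n => key n m hm z)
    linarith
  -- optimal initial coupling
  obtain ⟨νstar, hνcpl, hνmin⟩ := exists_coupling_min MX.init_prob MY.init_prob V
  refine ⟨⟨νstar, fun _ => mstar, hνcpl, fun t xy => hcpl xy⟩, fun t => rfl, ?_⟩
  show polVal δ C (fun _ : ℕ => mstar) νstar = dOTM (pGeom δ) MX MY C
  have hπprob : ∀ π : MarkovCoupling MX MY, ∀ (t : ℕ) w, IsProb (π.trans t w) :=
    fun π t w => (π.trans_coupling t w).isProb (MX.kernel_prob w.1)
  have hlow : ∀ π : MarkovCoupling MX MY,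
      ∑ z, νstar z * V z ≤ polVal δ C π.trans π.init := by
    intro π
    rw [polVal_linear hδ0 hδ1 hC (hπprob π) π.init]
    calc ∑ z, νstar z * V z ≤ ∑ z, π.init z * V z := hνmin π.init π.init_coupling
    _ ≤ ∑ w, π.init w * polVal δ C π.trans (unitMass w) := by
        refine Finset.sum_le_sum fun w _ => ?_
        exact mul_le_mul_of_nonneg_left (hVle_pol π.trans π.trans_coupling w)
          (π.init_coupling.1 w)
  have hFstar : polVal δ C (fun _ : ℕ => mstar) νstar = ∑ z, νstar z * V z := by
    rw [polVal_linear hδ0 hδ1 hC hmsprob νstar]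
    exact Finset.sum_congr rfl fun w _ => by rw [hWVz w]
  rw [hFstar]
  have hne : Nonempty (MarkovCoupling MX MY) :=
    ⟨⟨νstar, fun _ => mstar, hνcpl, fun t xy => hcpl xy⟩⟩
  refine le_antisymm (le_ciInf fun π => hlow π) ?_
  have hbdd : BddBelow (Set.range fun π : MarkovCoupling MX MY =>
      ∑' t, pGeom δ t * ∑ z, C z * π.law t z) := by
    refine ⟨0, ?_⟩
    rintro x ⟨π, rfl⟩
    exact polVal_nonneg hδ0 hδ1 hC (π.init_coupling.isProb MX.init_prob) (hπprob π)
  calc dOTM (pGeom δ) MX MY C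
      ≤ polVal δ C (fun _ : ℕ => mstar) νstar :=
        ciInf_le hbdd ⟨νstar, fun _ => mstar, hνcpl, fun t xy => hcpl xy⟩
  _ = ∑ z, νstar z * V z := hFstar
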